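/- arXiv:1902.09169 — 3 statements merged into one kernel-verified Lean document; each statement's English description precedes it below -/
import Mathlib

section
/- Let X_1, X_2, … be i.i.d. with E w(X_1) < ∞ for measurable w : X → (0,∞), let n_N/N → α ∈ (0,1) almost surely, and let c_N be the unique constant with ∑_{i=1}^N min{c_N w(X_i)/∑_j w(X_j), 1} = n_N. Then c_N/N → θ almost surely, where θ is the unique positive constant with E min{θ w(X_1)/E w(X_2), 1} = α. -/
open MeasureTheory ProbabilityTheory Filter

private lemma lipMin (x y c : ℝ) : |min x c - min y c| ≤ |x - y| := by
  have key : ∀ a b : ℝ, min a c - min b c ≤ |a - b| := by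
    intro a b
    rcases le_total b c with h | h
    · have h1 : min b c = b := min_eq_left h
      have h2 : min a c ≤ a := min_le_left _ _
      have hle : a - b ≤ |a - b| := le_abs_self _
      rw [h1]; linarith
    · have h1 : min b c = c := min_eq_right h
      have h2 : min a c ≤ c := min_le_right _ _
      have : min a c - min b c ≤ 0 := by rw [h1]; linarith
      exact this.trans (abs_nonneg _)
  rw [abs_sub_le_iff]
  exact ⟨key x y, (key y x).trans_eq (abs_sub_comm y x)⟩

theorem stmt12 {𝒳 Ω : Type*} [MeasurableSpace 𝒳] [MeasurableSpace Ω]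
    (P : Measure Ω) [IsProbabilityMeasure P]
    (X : ℕ → Ω → 𝒳) (hXmeas : ∀ i, Measurable (X i))
    (hindep : iIndepFun X P)
    (hident : ∀ i, Measure.map (X i) P = Measure.map (X 0) P)
    (w : 𝒳 → ℝ) (hwm : Measurable w) (hw : ∀ x, 0 < w x)
    (hint : Integrable (fun ω => w (X 0 ω)) P)
    (α : ℝ) (hα : α ∈ Set.Ioo (0:ℝ) 1)
    (n : ℕ → Ω → ℝ)
    (hn : ∀ᵐ ω ∂P, Tendsto (fun N : ℕ => n N ω / N) atTop (nhds α))
    (c : ℕ → Ω → ℝ)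
    (hc : ∀ N : ℕ, 0 < N → ∀ ω, 0 < c N ω ∧
      ∑ i ∈ Finset.range N,
        min (c N ω * w (X i ω) / ∑ j ∈ Finset.range N, w (X j ω)) 1 = n N ω)
    (θ : ℝ) (hθpos : 0 < θ)
    (hθeq : (∫ ω, min (θ * w (X 0 ω) / ∫ ω', w (X 0 ω') ∂P) 1 ∂P) = α) :
    ∀ᵐ ω ∂P, Tendsto (fun N : ℕ => c N ω / N) atTop (nhds θ) := by
  set μ₀ : ℝ := ∫ ω', w (X 0 ω') ∂P with hμ₀def
  have hμpos : 0 < μ₀ := by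
    rw [hμ₀def, integral_pos_iff_support_of_nonneg
      (fun ω => (hw (X 0 ω)).le) hint]
    have hs : Function.support (fun ω => w (X 0 ω)) = Set.univ := by
      ext ω; simp [Function.support, (hw (X 0 ω)).ne']
    rw [hs]
    simp
  have hmeasg : ∀ t : ℝ, Measurable (fun x => min (t * w x / μ₀) 1) :=
    fun t => ((hwm.const_mul t).div_const μ₀).min measurable_const
  have hZnn : ∀ (t : ℝ), 0 < t → ∀ x, (0:ℝ) ≤ min (t * w x / μ₀) 1 := by
    intro t ht x
    exact le_min (div_nonneg (mul_nonneg ht.le (hw _).le) hμpos.le) zero_le_one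
  have hZint : ∀ t : ℝ, 0 < t →
      Integrable (fun ω => min (t * w (X 0 ω) / μ₀) 1) P := by
    intro t ht
    refine (integrable_const (1:ℝ)).mono'
      ((hmeasg t).comp (hXmeas 0)).aestronglyMeasurable
      (Eventually.of_forall fun ω => ?_)
    rw [Real.norm_eq_abs, abs_le]
    exact ⟨by linarith [hZnn t ht (X 0 ω)], min_le_right _ _⟩
  set φ : ℝ → ℝ := fun t => ∫ ω, min (t * w (X 0 ω) / μ₀) 1 ∂P with hφdef
  have hφθ : φ θ = α := hθeq
  set A : Set Ω := {ω | θ * w (X 0 ω) / μ₀ < 1} with hAdef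
  have hApos : 0 < P A := by
    by_contra h
    push_neg at h
    have hA0 : P A = 0 := le_antisymm h zero_le
    have hae : ∀ᵐ ω ∂P, ¬ (θ * w (X 0 ω) / μ₀ < 1) := by
      rw [ae_iff]; simpa [hAdef] using hA0
    have h1 : φ θ = 1 := by
      have := integral_congr_ae (μ := P)
        (f := fun ω => min (θ * w (X 0 ω) / μ₀) 1) (g := fun _ => (1:ℝ))
        (hae.mono fun ω hω => by
          simp only [not_lt] at hω
          simp [min_eq_right hω])
      rw [hφdef]
      simp only []
      rw [this, integral_const]
      simp
    rw [hφθ] at h1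
    exact absurd h1 (by linarith [hα.2])
  -- strict monotonicity around θ
  have hmono : ∀ s t : ℝ, s ≤ t → ∀ x, min (s * w x / μ₀) 1 ≤ min (t * w x / μ₀) 1 := by
    intro s t hst x
    exact min_le_min ((div_le_div_iff_of_pos_right hμpos).2
      (mul_le_mul_of_nonneg_right hst (hw x).le)) le_rfl
  have hlt : ∀ t : ℝ, 0 < t → t < θ → φ t < α := by
    intro t ht htθ
    rw [← hφθ]
    have hsub : 0 < ∫ ω, (min (θ * w (X 0 ω) / μ₀) 1 - min (t * w (X 0 ω) / μ₀) 1) ∂P := by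
      rw [integral_pos_iff_support_of_nonneg_ae
        (Eventually.of_forall fun ω => sub_nonneg.2 (hmono t θ htθ.le (X 0 ω)))
        ((hZint θ hθpos).sub (hZint t ht))]
      refine lt_of_lt_of_le hApos (measure_mono ?_)
      intro ω hω
      have hwω := hw (X 0 ω)
      have hAω : θ * w (X 0 ω) / μ₀ < 1 := hω
      have hkey : t * w (X 0 ω) / μ₀ < θ * w (X 0 ω) / μ₀ :=
        (div_lt_div_iff_of_pos_right hμpos).2 (mul_lt_mul_of_pos_right htθ hwω)
      have h2 : min (t * w (X 0 ω) / μ₀) 1 = t * w (X 0 ω) / μ₀ :=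
        min_eq_left (le_of_lt (hkey.trans hAω))
      have h3 : min (θ * w (X 0 ω) / μ₀) 1 = θ * w (X 0 ω) / μ₀ := min_eq_left hAω.le
      simp only [Function.mem_support]
      rw [h2, h3]
      exact sub_ne_zero.2 (ne_of_gt hkey)
    have hi := integral_sub (hZint θ hθpos) (hZint t ht)
    rw [hi] at hsub
    exact lt_of_sub_pos hsub
  have hgt : ∀ t : ℝ, θ < t → α < φ t := by
    intro t ht
    rw [← hφθ]
    have htpos : 0 < t := hθpos.trans ht
    have hsub : 0 < ∫ ω, (min (t * w (X 0 ω) / μ₀) 1 - min (θ * w (X 0 ω) / μ₀) 1) ∂P := by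
      rw [integral_pos_iff_support_of_nonneg_ae
        (Eventually.of_forall fun ω => sub_nonneg.2 (hmono θ t ht.le (X 0 ω)))
        ((hZint t htpos).sub (hZint θ hθpos))]
      refine lt_of_lt_of_le hApos (measure_mono ?_)
      intro ω hω
      have hwω := hw (X 0 ω)
      have hAω : θ * w (X 0 ω) / μ₀ < 1 := hω
      have hkey : θ * w (X 0 ω) / μ₀ < t * w (X 0 ω) / μ₀ :=
        (div_lt_div_iff_of_pos_right hμpos).2 (mul_lt_mul_of_pos_right ht hwω)
      have h3 : min (θ * w (X 0 ω) / μ₀) 1 = θ * w (X 0 ω) / μ₀ := min_eq_left hAω.le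
      have h2 : θ * w (X 0 ω) / μ₀ < min (t * w (X 0 ω) / μ₀) 1 := lt_min hkey hAω
      simp only [Function.mem_support]
      rw [h3]
      exact sub_ne_zero.2 (ne_of_gt h2)
    have hi := integral_sub (hZint t htpos) (hZint θ hθpos)
    rw [hi] at hsub
    exact lt_of_sub_pos hsub
  -- identically distributed
  have hident' : ∀ i, IdentDistrib (X i) (X 0) P P :=
    fun i => ⟨(hXmeas i).aemeasurable, (hXmeas 0).aemeasurable, hident i⟩
  -- SLLN for w
  have hW : ∀ᵐ ω ∂P,
      Tendsto (fun N : ℕ => (∑ i ∈ Finset.range N, w (X i ω)) / N) atTop (nhds μ₀) := by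
    have := strong_law_ae_real (fun i => w ∘ X i) hint
      (fun i j hij => ((hindep.comp (fun _ => w) (fun _ => hwm)).indepFun hij))
      (fun i => (hident' i).comp hwm)
    filter_upwards [this] with ω hω
    simpa [Function.comp] using hω
  -- SLLN for truncated variables, all rational t simultaneously
  have hZ : ∀ᵐ ω ∂P, ∀ q : ℚ, 0 < (q:ℝ) →
      Tendsto (fun N : ℕ => (∑ i ∈ Finset.range N, min ((q:ℝ) * w (X i ω) / μ₀) 1) / N)
        atTop (nhds (φ q)) := by
    rw [ae_all_iff]
    intro q
    by_cases hq : 0 < (q:ℝ)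
    · have := strong_law_ae_real (fun i => (fun x => min ((q:ℝ) * w x / μ₀) 1) ∘ X i)
        (hZint q hq)
        (fun i j hij =>
          ((hindep.comp (fun _ => (fun x => min ((q:ℝ) * w x / μ₀) 1))
            (fun _ => hmeasg q)).indepFun hij))
        (fun i => (hident' i).comp (hmeasg q))
      filter_upwards [this] with ω hω _
      simpa [Function.comp] using hω
    · exact Eventually.of_forall fun ω hq' => absurd hq' hq
  -- combine
  filter_upwards [hn, hW, hZ] with ω hnω hWω hZω
  rw [Metric.tendsto_atTop]
  intro ε hε
  -- choose rationals
  obtain ⟨q1, hq1l, hq1r⟩ := exists_rat_btwn (show max (θ - ε) (θ / 2) < θ by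
    rw [max_lt_iff]; constructor <;> linarith)
  obtain ⟨q2, hq2l, hq2r⟩ := exists_rat_btwn (show θ < θ + ε by linarith)
  have hq1pos : 0 < (q1:ℝ) := lt_of_le_of_lt (by linarith) (lt_of_le_of_lt (le_max_right _ _) hq1l)
  have hq2pos : 0 < (q2:ℝ) := hθpos.trans hq2l
  have hφ1 : φ q1 < α := hlt q1 hq1pos hq1r
  have hφ2 : α < φ q2 := hgt q2 hq2l
  set S : ℕ → ℝ := fun N => ∑ i ∈ Finset.range N, w (X i ω) with hSdef
  have hSpos : ∀ N : ℕ, 0 < N → 0 < S N := by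
    intro N hN
    exact Finset.sum_pos (fun i _ => hw _) (Finset.nonempty_range_iff.2 hN.ne')
  -- convergence of the empirical truncated sums with S/N in place of μ₀
  have hT : ∀ q : ℚ, 0 < (q:ℝ) →
      Tendsto (fun N : ℕ =>
        (∑ i ∈ Finset.range N, min ((q:ℝ) * N * w (X i ω) / S N) 1) / N)
        atTop (nhds (φ q)) := by
    intro q hq
    set T : ℕ → ℝ := fun N =>
      (∑ i ∈ Finset.range N, min ((q:ℝ) * N * w (X i ω) / S N) 1) / N with hTdef
    set Aq : ℕ → ℝ := fun N =>
      (∑ i ∈ Finset.range N, min ((q:ℝ) * w (X i ω) / μ₀) 1) / N with hAqdef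
    have hdiff : Tendsto (fun N => T N - Aq N) atTop (nhds 0) := by
      set b : ℕ → ℝ := fun N => (q:ℝ) * |(S N / N)⁻¹ - μ₀⁻¹| * (S N / N) with hbdef
      have hbnd : ∀ N : ℕ, ‖T N - Aq N‖ ≤ b N := by
        intro N
        rcases Nat.eq_zero_or_pos N with h0 | hNpos
        · subst h0
          simp [hTdef, hAqdef, hbdef]
        · have hSN := hSpos N hNpos
          have hNne : (N:ℝ) ≠ 0 := Nat.cast_ne_zero.2 hNpos.ne'
          have hstep : ∀ i ∈ Finset.range N,
              |min ((q:ℝ) * N * w (X i ω) / S N) 1 - min ((q:ℝ) * w (X i ω) / μ₀) 1|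
              ≤ (q:ℝ) * |(S N / N)⁻¹ - μ₀⁻¹| * w (X i ω) := by
            intro i _
            refine (lipMin _ _ _).trans ?_
            have : (q:ℝ) * N * w (X i ω) / S N - (q:ℝ) * w (X i ω) / μ₀
                = ((S N / N)⁻¹ - μ₀⁻¹) * ((q:ℝ) * w (X i ω)) := by
              field_simp
            rw [this, abs_mul, abs_mul]
            rw [abs_of_nonneg hq.le, abs_of_nonneg (hw _).le]
            ring_nf
            exact le_refl _
          have hsum : |∑ i ∈ Finset.range N,
              (min ((q:ℝ) * N * w (X i ω) / S N) 1 - min ((q:ℝ) * w (X i ω) / μ₀) 1)|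
              ≤ (q:ℝ) * |(S N / N)⁻¹ - μ₀⁻¹| * S N := by
            refine (Finset.abs_sum_le_sum_abs _ _).trans ?_
            calc ∑ i ∈ Finset.range N,
                |min ((q:ℝ) * N * w (X i ω) / S N) 1 - min ((q:ℝ) * w (X i ω) / μ₀) 1|
                ≤ ∑ i ∈ Finset.range N, (q:ℝ) * |(S N / N)⁻¹ - μ₀⁻¹| * w (X i ω) :=
                  Finset.sum_le_sum hstep
              _ = (q:ℝ) * |(S N / N)⁻¹ - μ₀⁻¹| * S N := by
                  rw [hSdef, ← Finset.mul_sum]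
          have hTA : T N - Aq N = (∑ i ∈ Finset.range N,
              (min ((q:ℝ) * N * w (X i ω) / S N) 1 - min ((q:ℝ) * w (X i ω) / μ₀) 1)) / N := by
            rw [hTdef, hAqdef, Finset.sum_sub_distrib, sub_div]
          rw [Real.norm_eq_abs, hTA, abs_div, Nat.abs_cast]
          rw [hbdef]
          rw [div_le_iff₀ (by positivity)]
          calc |∑ i ∈ Finset.range N,
              (min ((q:ℝ) * N * w (X i ω) / S N) 1 - min ((q:ℝ) * w (X i ω) / μ₀) 1)|
              ≤ (q:ℝ) * |(S N / N)⁻¹ - μ₀⁻¹| * S N := hsum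
            _ = (q:ℝ) * |(S N / N)⁻¹ - μ₀⁻¹| * (S N / N) * N := by
                field_simp
      have hb : Tendsto (fun N => (q:ℝ) * |(S N / N)⁻¹ - μ₀⁻¹| * (S N / N)) atTop (nhds 0) := by
        have h1 : Tendsto (fun N : ℕ => (S N / N)⁻¹) atTop (nhds μ₀⁻¹) :=
          hWω.inv₀ hμpos.ne'
        have h2 : Tendsto (fun N : ℕ => (S N / N)⁻¹ - μ₀⁻¹) atTop (nhds 0) := by
          have := h1.sub (tendsto_const_nhds (x := μ₀⁻¹))
          simpa using this
        have h3 : Tendsto (fun N : ℕ => |(S N / N)⁻¹ - μ₀⁻¹|) atTop (nhds 0) := by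
          simpa using h2.abs
        have := ((tendsto_const_nhds (x := (q:ℝ))).mul h3).mul hWω
        simpa using this
      exact squeeze_zero_norm hbnd hb
    have hAqlim : Tendsto Aq atTop (nhds (φ q)) := hZω q hq
    have hsum : Tendsto (fun N => Aq N + (T N - Aq N)) atTop (nhds (φ q + 0)) :=
      hAqlim.add hdiff
    rw [add_zero] at hsum
    exact hsum.congr (fun N => by ring)
  -- final sandwich
  have h1 := (hT q1 hq1pos).eventually_lt hnω hφ1
  have h2 := hnω.eventually_lt (hT q2 hq2pos) hφ2
  have h3 : ∀ᶠ N : ℕ in atTop, 1 ≤ N := eventually_ge_atTop 1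
  obtain ⟨N0, hN0⟩ := eventually_atTop.1 ((h1.and h2).and h3)
  refine ⟨N0, fun N hN => ?_⟩
  obtain ⟨⟨hb1, hb2⟩, hb3⟩ := hN0 N hN
  have hNpos : 0 < N := hb3
  have hNR : (0:ℝ) < N := Nat.cast_pos.2 hNpos
  obtain ⟨hcpos, hceq⟩ := hc N hNpos ω
  have hSN := hSpos N hNpos
  -- lower bound: q1 < c N ω / N
  have hlow : (q1:ℝ) < c N ω / N := by
    by_contra h
    push_neg at h
    have hcle : c N ω ≤ (q1:ℝ) * N := by
      rw [div_le_iff₀ hNR] at h; linarith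
    have hsumle : n N ω ≤ ∑ i ∈ Finset.range N, min ((q1:ℝ) * N * w (X i ω) / S N) 1 := by
      rw [← hceq]
      refine Finset.sum_le_sum fun i _ => min_le_min ?_ le_rfl
      exact (div_le_div_iff_of_pos_right hSN).2 (mul_le_mul_of_nonneg_right hcle (hw _).le)
    have : n N ω / N ≤ (∑ i ∈ Finset.range N, min ((q1:ℝ) * N * w (X i ω) / S N) 1) / N := by
      gcongr
    linarith
  have hhigh : c N ω / N < (q2:ℝ) := by
    by_contra h
    push_neg at h
    have hcge : (q2:ℝ) * N ≤ c N ω := by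
      rw [le_div_iff₀ hNR] at h; linarith
    have hsumge : (∑ i ∈ Finset.range N, min ((q2:ℝ) * N * w (X i ω) / S N) 1) ≤ n N ω := by
      rw [← hceq]
      refine Finset.sum_le_sum fun i _ => min_le_min ?_ le_rfl
      exact (div_le_div_iff_of_pos_right hSN).2 (mul_le_mul_of_nonneg_right hcge (hw _).le)
    have : (∑ i ∈ Finset.range N, min ((q2:ℝ) * N * w (X i ω) / S N) 1) / N ≤ n N ω / N := by
      gcongr
    linarith
  rw [Real.dist_eq, abs_lt]
  have hq1ε : θ - ε < (q1:ℝ) := lt_of_le_of_lt (le_max_left _ _) hq1l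
  constructor <;> linarith
end

section
/- Under size-proportional Poisson sampling with π_{i,N} = min{c_N w(X_i)/∑_j w(X_j), 1}, c_N/N → θ a.s., and assuming E[f(Y_1)g(Y_1)/w_θ(X_1)²] < ∞ where w_θ(x) := min{w(x), E w(X_1)/θ}, the design covariance Σ'_N(f,g) := N^{-1} ∑_{i=1}^N ((1−π_{i,N})/π_{i,N}) f(Y_i) g(Y_i) converges almost surely to Σ'(f,g) := E[ w_θ(X_1)·( E w(X_2)/θ − w_θ(X_1) )·f(Y_1)g(Y_1)/w_θ(X_1)² ]. -/
open MeasureTheory ProbabilityTheory Filter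

example (a b c : ℝ) : |max a c - max b c| ≤ |a - b| := abs_max_sub_max_le_abs a b c

-- test the small lemmas first
lemma pt_eq {cc W S : ℝ} (hcc : 0 < cc) (hW : 0 < W) (hS : 0 < S) (F : ℝ) :
    (1 - min (cc * W / S) 1) / min (cc * W / S) 1 * F
      = max (S / cc - W) 0 / W * F := by
  have hcc' := hcc.ne'
  have hW' := hW.ne'
  have hS' := hS.ne'
  rcases le_total (cc * W / S) 1 with h | h
  · rw [min_eq_left h]
    have h1 : cc * W ≤ S := (div_le_one hS).1 h
    have h2 : W ≤ S / cc := (le_div_iff₀ hcc).2 (by linarith [mul_comm cc W])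
    rw [max_eq_left (by linarith)]
    field_simp
  · rw [min_eq_right h]
    have h1 : S ≤ cc * W := (one_le_div hS).1 h
    have h2 : S / cc ≤ W := (div_le_iff₀ hcc).2 (by linarith [mul_comm W cc])
    rw [max_eq_right (by linarith)]
    simp

lemma pt_lim {a t : ℝ} (ha : 0 < a) (ht : 0 < t) (F : ℝ) :
    min a t * (t - min a t) * F / (min a t) ^ 2 = max (t - a) 0 / a * F := by
  rcases le_total a t with h | h
  · rw [min_eq_left h, max_eq_left (by linarith)]
    field_simp
  · rw [min_eq_right h, max_eq_right (by linarith)]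
    simp

lemma slln_comp {Ω β : Type*} [MeasurableSpace Ω] [MeasurableSpace β]
    (P : Measure Ω) [IsProbabilityMeasure P]
    (Z : ℕ → Ω → β) (hZmeas : ∀ i, Measurable (Z i))
    (hindep : iIndepFun Z P)
    (hident : ∀ i, Measure.map (Z i) P = Measure.map (Z 0) P)
    (h : β → ℝ) (hm : Measurable h)
    (hint : Integrable (fun ω => h (Z 0 ω)) P) :
    ∀ᵐ ω ∂P, Tendsto (fun n : ℕ => (∑ i ∈ Finset.range n, h (Z i ω)) / n) atTop
      (nhds (∫ ω, h (Z 0 ω) ∂P)) := by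
  have := strong_law_ae_real (fun i ω => h (Z i ω)) hint ?_ ?_
  · exact this
  · intro i j hij
    exact (hindep.indepFun hij).comp hm hm
  · intro i
    refine ⟨(hm.comp (hZmeas i)).aemeasurable, (hm.comp (hZmeas 0)).aemeasurable, ?_⟩
    show Measure.map (h ∘ Z i) P = Measure.map (h ∘ Z 0) P
    rw [← Measure.map_map hm (hZmeas i), ← Measure.map_map hm (hZmeas 0), hident i]

theorem stmt13 {Ω 𝒴 𝒳 : Type*} [MeasurableSpace Ω] [MeasurableSpace 𝒴] [MeasurableSpace 𝒳]
    (P : Measure Ω) [IsProbabilityMeasure P]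
    (Z : ℕ → Ω → 𝒴 × 𝒳) (hZmeas : ∀ i, Measurable (Z i))
    (hindep : iIndepFun Z P)
    (hident : ∀ i, Measure.map (Z i) P = Measure.map (Z 0) P)
    (w : 𝒳 → ℝ) (hwm : Measurable w) (hw : ∀ x, 0 < w x)
    (hwint : Integrable (fun ω => w (Z 0 ω).2) P)
    (θ : ℝ) (hθ : 0 < θ)
    (c : ℕ → Ω → ℝ)
    (hc : ∀ᵐ ω ∂P, Tendsto (fun N : ℕ => c N ω / N) atTop (nhds θ))
    (f g : 𝒴 → ℝ) (hf : Measurable f) (hg : Measurable g)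
    (hfg : Integrable (fun ω => f (Z 0 ω).1 * g (Z 0 ω).1 /
        (min (w (Z 0 ω).2) ((∫ ω', w (Z 0 ω').2 ∂P) / θ)) ^ 2) P) :
    ∀ᵐ ω ∂P, Tendsto (fun N : ℕ =>
        (N : ℝ)⁻¹ * ∑ i ∈ Finset.range N,
          ((1 - min (c N ω * w (Z i ω).2 / ∑ j ∈ Finset.range N, w (Z j ω).2) 1)
              / min (c N ω * w (Z i ω).2 / ∑ j ∈ Finset.range N, w (Z j ω).2) 1)
            * (f (Z i ω).1 * g (Z i ω).1))
      atTop
      (nhds (∫ ω, min (w (Z 0 ω).2) ((∫ ω', w (Z 0 ω').2 ∂P) / θ)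
            * ((∫ ω', w (Z 0 ω').2 ∂P) / θ
                - min (w (Z 0 ω).2) ((∫ ω', w (Z 0 ω').2 ∂P) / θ))
            * (f (Z 0 ω).1 * g (Z 0 ω).1)
            / (min (w (Z 0 ω).2) ((∫ ω', w (Z 0 ω').2 ∂P) / θ)) ^ 2 ∂P)) := by
  set μw : ℝ := ∫ ω', w (Z 0 ω').2 ∂P with hμw
  have hμpos : 0 < μw := by
    rw [hμw, integral_pos_iff_support_of_nonneg (fun ω => (hw _).le) hwint]
    have hs : Function.support (fun ω => w (Z 0 ω).2) = Set.univ := by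
      ext ω; simp [Function.support, (hw (Z 0 ω).2).ne']
    rw [hs]; simp
  set t₀ : ℝ := μw / θ with ht₀
  have ht₀pos : 0 < t₀ := div_pos hμpos hθ
  set φ : 𝒴 × 𝒳 → ℝ := fun p => max (t₀ - w p.2) 0 / w p.2 * (f p.1 * g p.1) with hφdef
  set G : 𝒴 × 𝒳 → ℝ := fun p => |f p.1 * g p.1| / w p.2 with hGdef
  have hφm : Measurable φ :=
    (((measurable_const.sub (hwm.comp measurable_snd)).max measurable_const).div
        (hwm.comp measurable_snd)).mul
      ((hf.comp measurable_fst).mul (hg.comp measurable_fst))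
  have hGm : Measurable G :=
    (((hf.comp measurable_fst).mul (hg.comp measurable_fst)).abs).div
      (hwm.comp measurable_snd)
  have hwθpos : ∀ x, 0 < min (w x) t₀ := fun x => lt_min (hw x) ht₀pos
  -- bound G by the integrable function from hfg
  have hGbound : ∀ p : 𝒴 × 𝒳, |G p| ≤ t₀ *
      |f p.1 * g p.1 / (min (w p.2) t₀) ^ 2| := by
    intro p
    have hwp := hw p.2
    have hm := hwθpos p.2
    have hm2 : (0:ℝ) < (min (w p.2) t₀) ^ 2 := pow_pos hm 2
    have h1 : |G p| = |f p.1 * g p.1| / w p.2 :=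
      abs_of_nonneg (div_nonneg (abs_nonneg _) hwp.le)
    rw [h1, abs_div, abs_of_nonneg (sq_nonneg (min (w p.2) t₀))]
    have h2 : |f p.1 * g p.1| / w p.2 ≤ |f p.1 * g p.1| / min (w p.2) t₀ :=
      div_le_div_of_nonneg_left (abs_nonneg _) hm (min_le_left _ _)
    refine h2.trans ?_
    rw [mul_div_assoc', div_le_div_iff₀ hm hm2]
    nlinarith [mul_le_mul_of_nonneg_right (min_le_right (w p.2) t₀)
      (mul_nonneg (abs_nonneg (f p.1 * g p.1)) hm.le)]
  have hGint : Integrable (fun ω => G (Z 0 ω)) P := by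
    refine Integrable.mono' (hfg.abs.const_mul t₀)
      ((hGm.comp (hZmeas 0)).aestronglyMeasurable) ?_
    filter_upwards with ω
    simpa [Real.norm_eq_abs] using hGbound (Z 0 ω)
  have hφbound : ∀ p : 𝒴 × 𝒳, |φ p| ≤ t₀ * G p := by
    intro p
    have hwp := hw p.2
    have hmax0 : (0:ℝ) ≤ max (t₀ - w p.2) 0 := le_max_right _ _
    have hmaxt : max (t₀ - w p.2) 0 ≤ t₀ := max_le (by linarith) ht₀pos.le
    have : |φ p| = max (t₀ - w p.2) 0 / w p.2 * |f p.1 * g p.1| := by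
      rw [hφdef, abs_mul, abs_of_nonneg (div_nonneg hmax0 hwp.le)]
    rw [this, hGdef, mul_comm t₀ _]
    simp only []
    rw [div_mul_eq_mul_div, div_mul_eq_mul_div, div_le_div_iff₀ hwp hwp]
    nlinarith [mul_le_mul_of_nonneg_right hmaxt
      (mul_nonneg (abs_nonneg (f p.1 * g p.1)) hwp.le)]
  have hφint : Integrable (fun ω => φ (Z 0 ω)) P := by
    refine Integrable.mono' (hGint.const_mul t₀)
      ((hφm.comp (hZmeas 0)).aestronglyMeasurable) ?_
    filter_upwards with ω
    simpa [Real.norm_eq_abs] using hφbound (Z 0 ω)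
  -- three strong laws
  have hA := slln_comp P Z hZmeas hindep hident (fun p => w p.2)
    (hwm.comp measurable_snd) hwint
  have hB := slln_comp P Z hZmeas hindep hident φ hφm hφint
  have hC := slln_comp P Z hZmeas hindep hident G hGm hGint
  -- rewrite the limit integral
  have hLeq : (∫ ω, min (w (Z 0 ω).2) t₀ * (t₀ - min (w (Z 0 ω).2) t₀)
        * (f (Z 0 ω).1 * g (Z 0 ω).1) / (min (w (Z 0 ω).2) t₀) ^ 2 ∂P)
      = ∫ ω, φ (Z 0 ω) ∂P :=
    integral_congr_ae (Filter.Eventually.of_forall fun ω => pt_lim (hw _) ht₀pos _)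
  rw [hLeq]
  filter_upwards [hc, hA, hB, hC] with ω hcω hAω hBω hCω
  set W : ℕ → ℝ := fun i => w (Z i ω).2 with hW
  set F : ℕ → ℝ := fun i => f (Z i ω).1 * g (Z i ω).1 with hF
  set S : ℕ → ℝ := fun N => ∑ j ∈ Finset.range N, W j with hS
  have hWpos : ∀ i, 0 < W i := fun i => hw _
  have hSpos : ∀ N, 1 ≤ N → 0 < S N := fun N hN =>
    Finset.sum_pos (fun j _ => hWpos j) (Finset.nonempty_range_iff.2 (by omega))
  -- eventual positivity of c
  have hcpos : ∀ᶠ N in atTop, 0 < c N ω := by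
    have h1 : ∀ᶠ N in atTop, θ / 2 < c N ω / N :=
      hcω.eventually (eventually_gt_nhds (half_lt_self hθ))
    filter_upwards [h1, eventually_ge_atTop 1] with N hN hN1
    have hNpos : (0:ℝ) < N := by exact_mod_cast hN1
    by_contra h
    push_neg at h
    have : c N ω / N ≤ 0 := div_nonpos_of_nonpos_of_nonneg h hNpos.le
    linarith [half_pos hθ]
  -- convergence of t N := S N / c N ω
  set t : ℕ → ℝ := fun N => S N / c N ω with ht
  have htN : Tendsto t atTop (nhds t₀) := by
    have h1 : Tendsto (fun N : ℕ => (S N / N) / (c N ω / N)) atTop (nhds (μw / θ)) :=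
      hAω.div hcω hθ.ne'
    rw [ht₀]
    refine h1.congr' ?_
    filter_upwards [eventually_ge_atTop 1] with N hN
    have hNne : (N:ℝ) ≠ 0 := by positivity
    by_cases hcc : c N ω = 0
    · simp [ht, hcc]
    · field_simp [ht]
      rw [ht]; field_simp
  -- the two random averages
  set D : ℕ → ℝ := fun N => (∑ i ∈ Finset.range N, max (t N - W i) 0 / W i * F i) / N
    with hD
  set E : ℕ → ℝ := fun N => (∑ i ∈ Finset.range N, φ (Z i ω)) / N with hE
  -- D - E tends to zero
  have hdiff : ∀ᶠ N in atTop, |D N - E N| ≤ |t N - t₀| * ((∑ i ∈ Finset.range N, G (Z i ω)) / N) := by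
    filter_upwards [eventually_ge_atTop 1] with N hN
    have hNpos : (0:ℝ) < N := by exact_mod_cast hN
    rw [hD, hE, div_sub_div_same, ← Finset.sum_sub_distrib]
    rw [abs_div, abs_of_pos hNpos, mul_comm (|t N - t₀|) _, div_mul_eq_mul_div,
      div_le_div_iff₀ hNpos hNpos]
    have hterm : ∀ i ∈ Finset.range N,
        |max (t N - W i) 0 / W i * F i - φ (Z i ω)| ≤ G (Z i ω) * |t N - t₀| := by
      intro i _
      have hWi := hWpos i
      have heq : max (t N - W i) 0 / W i * F i - φ (Z i ω)
          = (max (t N - W i) 0 - max (t₀ - W i) 0) * F i / W i := by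
        rw [hφdef]
        show _ = _
        simp only [hW, hF] at hWi ⊢
        field_simp
      rw [heq, abs_div, abs_mul, abs_of_pos hWi]
      have h3 : |max (t N - W i) 0 - max (t₀ - W i) 0| ≤ |t N - t₀| := by
        have := abs_max_sub_max_le_abs (t N - W i) (t₀ - W i) 0
        simpa using this
      have h4 : G (Z i ω) = |F i| / W i := rfl
      rw [h4, div_mul_eq_mul_div, div_le_div_iff₀ hWi hWi]
      nlinarith [mul_le_mul_of_nonneg_right h3
        (mul_nonneg (abs_nonneg (F i)) hWi.le)]
    calc |∑ i ∈ Finset.range N, (max (t N - W i) 0 / W i * F i - φ (Z i ω))| * N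
        ≤ (∑ i ∈ Finset.range N, G (Z i ω) * |t N - t₀|) * N := by
          gcongr ?_ * N
          exact (Finset.abs_sum_le_sum_abs _ _).trans (Finset.sum_le_sum hterm)
      _ = (∑ i ∈ Finset.range N, G (Z i ω)) * |t N - t₀| * N := by
          rw [← Finset.sum_mul]
  have h0 : Tendsto (fun N => |t N - t₀| * ((∑ i ∈ Finset.range N, G (Z i ω)) / N))
      atTop (nhds 0) := by
    have h1 : Tendsto (fun N => |t N - t₀|) atTop (nhds 0) := by
      have h2 : Tendsto (fun N => t N - t₀) atTop (nhds 0) := by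
        simpa using htN.sub (tendsto_const_nhds (x := t₀) (f := atTop))
      simpa using h2.abs
    have := h1.mul hCω
    simpa using this
  have hDE : Tendsto (fun N => D N - E N) atTop (nhds 0) := by
    rw [tendsto_zero_iff_abs_tendsto_zero]
    exact squeeze_zero' (Filter.Eventually.of_forall fun N => abs_nonneg _) hdiff h0
  have hDten : Tendsto D atTop (nhds (∫ ω, φ (Z 0 ω) ∂P)) := by
    have := hDE.add hBω
    simpa using this
  -- finally, the goal function eventually equals D
  refine hDten.congr' ?_
  filter_upwards [eventually_ge_atTop 1, hcpos] with N hN hcN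
  show (∑ i ∈ Finset.range N, max (t N - W i) 0 / W i * F i) / (N:ℝ) = _
  rw [div_eq_inv_mul]
  congr 1
  refine Finset.sum_congr rfl fun i _ => ?_
  exact (pt_eq hcN (hWpos i) (hSpos N hN) (F i)).symm
end

section
/- Let F be a class of functions and suppose there exists a constant C ≠ 0 such that the constant function C belongs to F. If the Lindeberg-type condition N^{-1}∑_{i=1}^N ((1−π_{i,N})/π_{i,N}) ‖v(Y_i)‖² 1{‖v(Y_i)‖ > π_{i,N}√N ε} → 0 in probability holds for every ε > 0 and every finite vector v of functions from F, then it also holds with v(Y_i) replaced by v(Y_i) − P_N v, where P_N v := N^{-1}∑_j v(Y_j), provided each coordinate of P_N v converges in probability to a finite limit. -/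
open MeasureTheory ProbabilityTheory Filter Topology

/-- Auxiliary pointwise inequality for a single summand: bounding a truncated
centered term by a truncated uncentered term (with modified truncation level). -/
lemma stmt19_aux (a sN ε ε' K c A Q : ℝ) (hc : 0 ≤ c) (hQ : 0 ≤ Q)
    (hK : 0 < K) (hAle : A ≤ 2 * K * Q)
    (hε : a * sN * ε = (a * sN * ε') * Real.sqrt (2 * K)) :
    c * A * (if a * sN * ε < Real.sqrt A then 1 else 0)
      ≤ 2 * K * (c * Q * (if a * sN * ε' < Real.sqrt Q then 1 else 0)) := by
  have h2K : (0:ℝ) < 2 * K := by linarith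
  have hs2K : 0 < Real.sqrt (2 * K) := Real.sqrt_pos.mpr h2K
  by_cases h : a * sN * ε < Real.sqrt A
  · have hcond' : a * sN * ε' < Real.sqrt Q := by
      have hsA : Real.sqrt A ≤ Real.sqrt (2 * K) * Real.sqrt Q := by
        rw [← Real.sqrt_mul (le_of_lt h2K)]
        exact Real.sqrt_le_sqrt hAle
      have hlt : (a * sN * ε') * Real.sqrt (2 * K)
          < Real.sqrt Q * Real.sqrt (2 * K) := by
        rw [← hε]
        calc a * sN * ε < Real.sqrt A := h
          _ ≤ Real.sqrt (2 * K) * Real.sqrt Q := hsA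
          _ = Real.sqrt Q * Real.sqrt (2 * K) := mul_comm _ _
      exact lt_of_mul_lt_mul_right hlt hs2K.le
    rw [if_pos h, if_pos hcond']
    calc c * A * 1 = c * A := mul_one _
      _ ≤ c * (2 * K * Q) := mul_le_mul_of_nonneg_left hAle hc
      _ = 2 * K * (c * Q * 1) := by ring
  · rw [if_neg h, mul_zero]
    have hind : (0:ℝ) ≤ if a * sN * ε' < Real.sqrt Q then 1 else 0 := by
      split <;> norm_num
    exact mul_nonneg (le_of_lt h2K) (mul_nonneg (mul_nonneg hc hQ) hind)

theorem stmt19 {Ω 𝒴 : Type*} [MeasurableSpace Ω] [MeasurableSpace 𝒴]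
    (P : Measure Ω) [IsProbabilityMeasure P]
    (Y : ℕ → Ω → 𝒴) (hY : ∀ i, Measurable (Y i))
    (π : (N : ℕ) → ℕ → Ω → ℝ)
    (hπ : ∀ N i ω, π N i ω ∈ Set.Ioc (0:ℝ) 1)
    (F : Set (𝒴 → ℝ)) (C : ℝ) (hC : C ≠ 0) (hCF : (fun _ => C) ∈ F)
    (hLind : ∀ (r : ℕ) (v : Fin r → 𝒴 → ℝ), (∀ k, v k ∈ F) → ∀ ε : ℝ, 0 < ε →
      TendstoInMeasure P (fun (N : ℕ) ω =>
          (N : ℝ)⁻¹ * ∑ i ∈ Finset.range N,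
            ((1 - π N i ω) / π N i ω)
              * (∑ k, (v k (Y i ω)) ^ 2)
              * (if π N i ω * Real.sqrt N * ε
                    < Real.sqrt (∑ k, (v k (Y i ω)) ^ 2) then 1 else 0))
        atTop (fun _ => (0 : ℝ))) :
    ∀ (r : ℕ) (v : Fin r → 𝒴 → ℝ), (∀ k, v k ∈ F) →
      (∃ m : Fin r → ℝ, ∀ k, TendstoInMeasure P
          (fun (N : ℕ) ω => (N : ℝ)⁻¹ * ∑ j ∈ Finset.range N, v k (Y j ω))
          atTop (fun _ => m k)) →
      ∀ ε : ℝ, 0 < ε →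
      TendstoInMeasure P (fun (N : ℕ) ω =>
          (N : ℝ)⁻¹ * ∑ i ∈ Finset.range N,
            ((1 - π N i ω) / π N i ω)
              * (∑ k, (v k (Y i ω)
                  - (N : ℝ)⁻¹ * ∑ j ∈ Finset.range N, v k (Y j ω)) ^ 2)
              * (if π N i ω * Real.sqrt N * ε
                    < Real.sqrt (∑ k, (v k (Y i ω)
                        - (N : ℝ)⁻¹ * ∑ j ∈ Finset.range N, v k (Y j ω)) ^ 2)
                  then 1 else 0))
        atTop (fun _ => (0 : ℝ)) := by
  rintro r v hv ⟨m, hm⟩ ε hε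
  -- constants
  have hM2 : (0:ℝ) ≤ ∑ k : Fin r, (|m k| + 1) ^ 2 :=
    Finset.sum_nonneg fun k _ => sq_nonneg _
  set M2 : ℝ := ∑ k : Fin r, (|m k| + 1) ^ 2 with hM2def
  have hC2 : (0:ℝ) < C ^ 2 :=
    lt_of_le_of_ne (sq_nonneg C) (Ne.symm (pow_ne_zero 2 hC))
  set K : ℝ := max 1 (M2 / C ^ 2) with hKdef
  have hK1 : (1:ℝ) ≤ K := le_max_left _ _
  have hK0 : (0:ℝ) < K := lt_of_lt_of_le one_pos hK1
  have hM2K : M2 ≤ K * C ^ 2 := by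
    have h := le_max_right 1 (M2 / C ^ 2)
    calc M2 = (M2 / C ^ 2) * C ^ 2 := (div_mul_cancel₀ _ (ne_of_gt hC2)).symm
      _ ≤ K * C ^ 2 := mul_le_mul_of_nonneg_right h (le_of_lt hC2)
  have h2K : (0:ℝ) < 2 * K := by linarith
  have hs2K : 0 < Real.sqrt (2 * K) := Real.sqrt_pos.mpr h2K
  set ε' : ℝ := ε / Real.sqrt (2 * K) with hε'def
  have hε' : 0 < ε' := div_pos hε hs2K
  have hεfac : ∀ x : ℝ, x * ε = (x * ε') * Real.sqrt (2 * K) := by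
    intro x
    rw [hε'def]
    field_simp
  -- augmented vector of functions
  set w : Fin (r + 1) → 𝒴 → ℝ := Fin.cons (fun _ => C) v with hwdef
  have hw : ∀ k, w k ∈ F := by
    intro k
    refine Fin.cases ?_ ?_ k
    · simpa [hwdef] using hCF
    · intro j; simpa [hwdef] using hv j
  have hQ : ∀ y : 𝒴, ∑ k, (w k y) ^ 2 = C ^ 2 + ∑ k, (v k y) ^ 2 := by
    intro y
    simp [hwdef, Fin.sum_univ_succ]
  have hg := hLind (r + 1) w hw ε' hε'
  rw [tendstoInMeasure_iff_dist]
  intro δ hδ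
  have hδ2K : 0 < δ / (2 * K) := div_pos hδ h2K
  have hgδ : Tendsto (fun (N : ℕ) => P {x | δ / (2 * K) ≤
      dist ((N : ℝ)⁻¹ * ∑ i ∈ Finset.range N,
        ((1 - π N i x) / π N i x) * (∑ k, (w k (Y i x)) ^ 2)
          * (if π N i x * Real.sqrt N * ε'
              < Real.sqrt (∑ k, (w k (Y i x)) ^ 2) then 1 else 0)) 0})
      atTop (𝓝 0) := tendstoInMeasure_iff_dist.mp hg (δ / (2 * K)) hδ2K
  have hAk : ∀ k : Fin r, Tendsto (fun (N : ℕ) => P {x | (1:ℝ) ≤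
      dist ((N : ℝ)⁻¹ * ∑ j ∈ Finset.range N, v k (Y j x)) (m k)})
      atTop (𝓝 0) := fun k => tendstoInMeasure_iff_dist.mp (hm k) 1 one_pos
  -- set inclusion
  have hsub : ∀ N : ℕ,
      {x | δ ≤ dist ((N : ℝ)⁻¹ * ∑ i ∈ Finset.range N,
          ((1 - π N i x) / π N i x)
            * (∑ k, (v k (Y i x)
                - (N : ℝ)⁻¹ * ∑ j ∈ Finset.range N, v k (Y j x)) ^ 2)
            * (if π N i x * Real.sqrt N * ε
                  < Real.sqrt (∑ k, (v k (Y i x)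
                      - (N : ℝ)⁻¹ * ∑ j ∈ Finset.range N, v k (Y j x)) ^ 2)
                then 1 else 0)) 0} ⊆
      (⋃ k : Fin r, {x | (1:ℝ) ≤
          dist ((N : ℝ)⁻¹ * ∑ j ∈ Finset.range N, v k (Y j x)) (m k)}) ∪
      {x | δ / (2 * K) ≤
          dist ((N : ℝ)⁻¹ * ∑ i ∈ Finset.range N,
            ((1 - π N i x) / π N i x) * (∑ k, (w k (Y i x)) ^ 2)
              * (if π N i x * Real.sqrt N * ε'
                  < Real.sqrt (∑ k, (w k (Y i x)) ^ 2) then 1 else 0)) 0} := by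
    intro N x hx
    by_cases hb : x ∈ ⋃ k : Fin r, {x | (1:ℝ) ≤
        dist ((N : ℝ)⁻¹ * ∑ j ∈ Finset.range N, v k (Y j x)) (m k)}
    · exact Or.inl hb
    · right
      simp only [Set.mem_setOf_eq] at hx ⊢
      rw [Real.dist_eq, sub_zero] at hx ⊢
      -- on the complement of the bad event, the empirical means are bounded
      have hgood : ∀ k : Fin r,
          ((N : ℝ)⁻¹ * ∑ j ∈ Finset.range N, v k (Y j x)) ^ 2
            ≤ (|m k| + 1) ^ 2 := by
        intro k
        have h1 : ¬ (1:ℝ) ≤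
            dist ((N : ℝ)⁻¹ * ∑ j ∈ Finset.range N, v k (Y j x)) (m k) :=
          fun h => hb (Set.mem_iUnion.mpr ⟨k, h⟩)
        push_neg at h1
        rw [Real.dist_eq] at h1
        set p : ℝ := (N : ℝ)⁻¹ * ∑ j ∈ Finset.range N, v k (Y j x) with hpdef
        have h2 : |p| ≤ |m k| + 1 := by
          calc |p| = |(p - m k) + m k| := by ring_nf
            _ ≤ |p - m k| + |m k| := abs_add_le _ _
            _ ≤ |m k| + 1 := by linarith [le_of_lt h1]
        calc p ^ 2 = |p| ^ 2 := (sq_abs p).symm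
          _ ≤ (|m k| + 1) ^ 2 := pow_le_pow_left₀ (abs_nonneg _) h2 2
      have hPsum : ∑ k : Fin r,
          ((N : ℝ)⁻¹ * ∑ j ∈ Finset.range N, v k (Y j x)) ^ 2 ≤ M2 :=
        Finset.sum_le_sum fun k _ => hgood k
      -- per-summand bound
      have hterm : ∀ i ∈ Finset.range N,
          ((1 - π N i x) / π N i x)
            * (∑ k, (v k (Y i x)
                - (N : ℝ)⁻¹ * ∑ j ∈ Finset.range N, v k (Y j x)) ^ 2)
            * (if π N i x * Real.sqrt N * ε
                  < Real.sqrt (∑ k, (v k (Y i x)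
                      - (N : ℝ)⁻¹ * ∑ j ∈ Finset.range N, v k (Y j x)) ^ 2)
                then 1 else 0)
          ≤ 2 * K * (((1 - π N i x) / π N i x) * (∑ k, (w k (Y i x)) ^ 2)
              * (if π N i x * Real.sqrt N * ε'
                  < Real.sqrt (∑ k, (w k (Y i x)) ^ 2) then 1 else 0)) := by
        intro i _
        have hc : 0 ≤ (1 - π N i x) / π N i x :=
          div_nonneg (by linarith [(hπ N i x).2]) (le_of_lt (hπ N i x).1)
        have hQnn : (0:ℝ) ≤ ∑ k, (w k (Y i x)) ^ 2 :=
          Finset.sum_nonneg fun k _ => sq_nonneg _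
        have hvnn : (0:ℝ) ≤ ∑ k : Fin r, (v k (Y i x)) ^ 2 :=
          Finset.sum_nonneg fun k _ => sq_nonneg _
        have hAle : (∑ k, (v k (Y i x)
              - (N : ℝ)⁻¹ * ∑ j ∈ Finset.range N, v k (Y j x)) ^ 2)
            ≤ 2 * K * (∑ k, (w k (Y i x)) ^ 2) := by
          have h1 : ∀ k : Fin r, (v k (Y i x)
              - (N : ℝ)⁻¹ * ∑ j ∈ Finset.range N, v k (Y j x)) ^ 2
              ≤ 2 * (v k (Y i x)) ^ 2
                + 2 * ((N : ℝ)⁻¹ * ∑ j ∈ Finset.range N, v k (Y j x)) ^ 2 := by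
            intro k
            nlinarith [sq_nonneg (v k (Y i x)
              + (N : ℝ)⁻¹ * ∑ j ∈ Finset.range N, v k (Y j x))]
          have h2 : (∑ k, (v k (Y i x)
                - (N : ℝ)⁻¹ * ∑ j ∈ Finset.range N, v k (Y j x)) ^ 2)
              ≤ 2 * (∑ k : Fin r, (v k (Y i x)) ^ 2)
                + 2 * (∑ k : Fin r,
                  ((N : ℝ)⁻¹ * ∑ j ∈ Finset.range N, v k (Y j x)) ^ 2) := by
            calc (∑ k, (v k (Y i x)
                  - (N : ℝ)⁻¹ * ∑ j ∈ Finset.range N, v k (Y j x)) ^ 2)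
                ≤ ∑ k : Fin r, (2 * (v k (Y i x)) ^ 2
                    + 2 * ((N : ℝ)⁻¹ * ∑ j ∈ Finset.range N, v k (Y j x)) ^ 2) :=
                  Finset.sum_le_sum fun k _ => h1 k
              _ = 2 * (∑ k : Fin r, (v k (Y i x)) ^ 2)
                  + 2 * (∑ k : Fin r,
                    ((N : ℝ)⁻¹ * ∑ j ∈ Finset.range N, v k (Y j x)) ^ 2) := by
                  rw [Finset.sum_add_distrib, ← Finset.mul_sum, ← Finset.mul_sum]
          rw [hQ (Y i x)]
          nlinarith [mul_nonneg (sub_nonneg.mpr hK1) hvnn]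
        exact stmt19_aux (π N i x) (Real.sqrt N) ε ε' K _ _ _ hc hQnn hK0 hAle
          (hεfac _)
      -- nonnegativity of both sides
      have hind : ∀ (p : Prop) (inst : Decidable p),
          (0:ℝ) ≤ @ite ℝ p inst 1 0 := by
        intro p inst; split <;> norm_num
      have hNnn : (0:ℝ) ≤ (N : ℝ)⁻¹ := by positivity
      have hfnn : (0:ℝ) ≤ (N : ℝ)⁻¹ * ∑ i ∈ Finset.range N,
          ((1 - π N i x) / π N i x)
            * (∑ k, (v k (Y i x)
                - (N : ℝ)⁻¹ * ∑ j ∈ Finset.range N, v k (Y j x)) ^ 2)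
            * (if π N i x * Real.sqrt N * ε
                  < Real.sqrt (∑ k, (v k (Y i x)
                      - (N : ℝ)⁻¹ * ∑ j ∈ Finset.range N, v k (Y j x)) ^ 2)
                then 1 else 0) := by
        refine mul_nonneg hNnn (Finset.sum_nonneg fun i _ => ?_)
        refine mul_nonneg (mul_nonneg ?_ ?_) (hind _ _)
        · exact div_nonneg (by linarith [(hπ N i x).2]) (le_of_lt (hπ N i x).1)
        · exact Finset.sum_nonneg fun k _ => sq_nonneg _
      have hgnn : (0:ℝ) ≤ (N : ℝ)⁻¹ * ∑ i ∈ Finset.range N,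
          ((1 - π N i x) / π N i x) * (∑ k, (w k (Y i x)) ^ 2)
            * (if π N i x * Real.sqrt N * ε'
                < Real.sqrt (∑ k, (w k (Y i x)) ^ 2) then 1 else 0) := by
        refine mul_nonneg hNnn (Finset.sum_nonneg fun i _ => ?_)
        refine mul_nonneg (mul_nonneg ?_ ?_) (hind _ _)
        · exact div_nonneg (by linarith [(hπ N i x).2]) (le_of_lt (hπ N i x).1)
        · exact Finset.sum_nonneg fun k _ => sq_nonneg _
      rw [abs_of_nonneg hfnn] at hx
      rw [abs_of_nonneg hgnn]
      -- combine
      have hsum := Finset.sum_le_sum hterm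
      rw [← Finset.mul_sum] at hsum
      have hfg : (N : ℝ)⁻¹ * ∑ i ∈ Finset.range N,
          ((1 - π N i x) / π N i x)
            * (∑ k, (v k (Y i x)
                - (N : ℝ)⁻¹ * ∑ j ∈ Finset.range N, v k (Y j x)) ^ 2)
            * (if π N i x * Real.sqrt N * ε
                  < Real.sqrt (∑ k, (v k (Y i x)
                      - (N : ℝ)⁻¹ * ∑ j ∈ Finset.range N, v k (Y j x)) ^ 2)
                then 1 else 0)
          ≤ 2 * K * ((N : ℝ)⁻¹ * ∑ i ∈ Finset.range N,
              ((1 - π N i x) / π N i x) * (∑ k, (w k (Y i x)) ^ 2)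
                * (if π N i x * Real.sqrt N * ε'
                    < Real.sqrt (∑ k, (w k (Y i x)) ^ 2) then 1 else 0)) := by
        calc (N : ℝ)⁻¹ * _ ≤ (N : ℝ)⁻¹ * (2 * K * _) :=
              mul_le_mul_of_nonneg_left hsum hNnn
          _ = 2 * K * ((N : ℝ)⁻¹ * _) := by ring
      rw [div_le_iff₀ h2K]
      nlinarith
  -- measure comparison and limit
  have hmono : ∀ N : ℕ,
      P {x | δ ≤ dist ((N : ℝ)⁻¹ * ∑ i ∈ Finset.range N,
          ((1 - π N i x) / π N i x)
            * (∑ k, (v k (Y i x)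
                - (N : ℝ)⁻¹ * ∑ j ∈ Finset.range N, v k (Y j x)) ^ 2)
            * (if π N i x * Real.sqrt N * ε
                  < Real.sqrt (∑ k, (v k (Y i x)
                      - (N : ℝ)⁻¹ * ∑ j ∈ Finset.range N, v k (Y j x)) ^ 2)
                then 1 else 0)) 0}
      ≤ (∑ k : Fin r, P {x | (1:ℝ) ≤
          dist ((N : ℝ)⁻¹ * ∑ j ∈ Finset.range N, v k (Y j x)) (m k)})
        + P {x | δ / (2 * K) ≤
          dist ((N : ℝ)⁻¹ * ∑ i ∈ Finset.range N,
            ((1 - π N i x) / π N i x) * (∑ k, (w k (Y i x)) ^ 2)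
              * (if π N i x * Real.sqrt N * ε'
                  < Real.sqrt (∑ k, (w k (Y i x)) ^ 2) then 1 else 0)) 0} := by
    intro N
    calc P _ ≤ P ((⋃ k : Fin r, {x | (1:ℝ) ≤
            dist ((N : ℝ)⁻¹ * ∑ j ∈ Finset.range N, v k (Y j x)) (m k)}) ∪
          {x | δ / (2 * K) ≤
            dist ((N : ℝ)⁻¹ * ∑ i ∈ Finset.range N,
              ((1 - π N i x) / π N i x) * (∑ k, (w k (Y i x)) ^ 2)
                * (if π N i x * Real.sqrt N * ε'
                    < Real.sqrt (∑ k, (w k (Y i x)) ^ 2) then 1 else 0)) 0}) :=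
        measure_mono (hsub N)
      _ ≤ P (⋃ k : Fin r, {x | (1:ℝ) ≤
            dist ((N : ℝ)⁻¹ * ∑ j ∈ Finset.range N, v k (Y j x)) (m k)})
          + P {x | δ / (2 * K) ≤
            dist ((N : ℝ)⁻¹ * ∑ i ∈ Finset.range N,
              ((1 - π N i x) / π N i x) * (∑ k, (w k (Y i x)) ^ 2)
                * (if π N i x * Real.sqrt N * ε'
                    < Real.sqrt (∑ k, (w k (Y i x)) ^ 2) then 1 else 0)) 0} :=
        measure_union_le _ _
      _ ≤ _ := by
        gcongr
        exact (measure_iUnion_le _).trans_eq (tsum_fintype _)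
  have hlim : Tendsto (fun N : ℕ =>
      (∑ k : Fin r, P {x | (1:ℝ) ≤
          dist ((N : ℝ)⁻¹ * ∑ j ∈ Finset.range N, v k (Y j x)) (m k)})
        + P {x | δ / (2 * K) ≤
          dist ((N : ℝ)⁻¹ * ∑ i ∈ Finset.range N,
            ((1 - π N i x) / π N i x) * (∑ k, (w k (Y i x)) ^ 2)
              * (if π N i x * Real.sqrt N * ε'
                  < Real.sqrt (∑ k, (w k (Y i x)) ^ 2) then 1 else 0)) 0})
      atTop (𝓝 0) := by
    have h1 : Tendsto (fun N : ℕ => ∑ k : Fin r, P {x | (1:ℝ) ≤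
        dist ((N : ℝ)⁻¹ * ∑ j ∈ Finset.range N, v k (Y j x)) (m k)})
        atTop (𝓝 0) := by
      have := tendsto_finset_sum (Finset.univ : Finset (Fin r))
        (fun k _ => hAk k)
      simpa using this
    have := h1.add hgδ
    simpa using this
  exact tendsto_of_tendsto_of_tendsto_of_le_of_le tendsto_const_nhds hlim
    (fun N => zero_le) hmono
end
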